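/- Let l ∈ ℝ, ε > 0, and let ψ : (l, l+ε] → ℝ be continuously differentiable such that the limit lim_{x → l⁺} ψ'(x)·(x−l) exists and is nonzero. Then for every b ∈ (0,1], the function ψ is not b-Hölder on (l, l+ε]. -/

import Mathlib

open Set Filter

lemma stmt_7_aux (l ε : ℝ) (hε : 0 < ε)
    (ψ ψ' : ℝ → ℝ)
    (hd : ∀ x ∈ Set.Ioc l (l + ε), HasDerivWithinAt ψ (ψ' x) (Set.Ioc l (l + ε)) x)
    (L : ℝ) (hL : 0 < L)
    (hlim : Filter.Tendsto (fun x => ψ' x * (x - l))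
      (nhdsWithin l (Set.Ioi l)) (nhds L)) :
    ∀ b : ℝ, 0 < b → b ≤ 1 →
      ¬ ∃ M : ℝ, 0 ≤ M ∧ ∀ x ∈ Set.Ioc l (l + ε), ∀ y ∈ Set.Ioc l (l + ε),
        |ψ x - ψ y| ≤ M * |x - y| ^ b := by
  intro b hb hb1 ⟨M, hM, hH⟩
  -- find δ > 0 such that ψ' x * (x - l) > L/2 on the punctured right nbhd
  have hev : ∀ᶠ x in nhdsWithin l (Set.Ioi l), L / 2 < ψ' x * (x - l) :=
    hlim.eventually (eventually_gt_nhds (by linarith))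
  rw [eventually_nhdsWithin_iff] at hev
  rcases Metric.eventually_nhds_iff.mp hev with ⟨δ, hδ, hball⟩
  set u : ℝ := min (δ / 2) ε with hu_def
  have hu : 0 < u := lt_min (by linarith) hε
  have huε : u ≤ ε := min_le_right _ _
  set y0 : ℝ := l + u with hy0_def
  have hy0mem : y0 ∈ Set.Ioc l (l + ε) := ⟨by linarith, by linarith⟩
  -- key derivative bound on (l, y0]
  have hkey : ∀ c ∈ Set.Ioc l y0, L / 2 < ψ' c * (c - l) := by
    intro c hc
    apply hball
    · rw [Real.dist_eq, abs_of_pos (by linarith [hc.1] : (0:ℝ) < c - l)]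
      have : c - l ≤ u := by linarith [hc.2]
      have : u ≤ δ / 2 := min_le_left _ _
      linarith [hc.2, min_le_left (δ/2) ε]
    · exact hc.1
  set C : ℝ := M * ε ^ b with hC_def
  have hC0 : 0 ≤ C := mul_nonneg hM (Real.rpow_nonneg hε.le b)
  have hbdd : ∀ x ∈ Set.Ioc l (l + ε), ∀ y ∈ Set.Ioc l (l + ε), |ψ x - ψ y| ≤ C := by
    intro x hx y hy
    refine (hH x hx y hy).trans (mul_le_mul_of_nonneg_left ?_ hM)
    apply Real.rpow_le_rpow (abs_nonneg _) _ hb.le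
    rw [abs_sub_le_iff]
    constructor <;> linarith [hx.1, hx.2, hy.1, hy.2]
  set K : ℝ := L / 2 with hK_def
  have hK : 0 < K := by positivity
  set t : ℝ := u * Real.exp (-(C + 1) / K) with ht_def
  have ht0 : 0 < t := mul_pos hu (Real.exp_pos _)
  have htu : t < u := by
    have : Real.exp (-(C + 1) / K) < 1 := by
      apply Real.exp_lt_one_iff.mpr
      apply div_neg_of_neg_of_pos (by linarith) hK
    nlinarith
  set x0 : ℝ := l + t with hx0_def
  have hx0y0 : x0 < y0 := by simp only [hx0_def, hy0_def]; linarith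
  have hx0mem : x0 ∈ Set.Ioc l (l + ε) := ⟨by linarith, by linarith⟩
  -- the auxiliary function h
  set h : ℝ → ℝ := fun s => ψ s - K * Real.log (s - l) with hh_def
  have hsub : Set.Icc x0 y0 ⊆ Set.Ioc l (l + ε) := fun s hs =>
    ⟨by linarith [hs.1], by linarith [hs.2]⟩
  have hcontψ : ContinuousOn ψ (Set.Icc x0 y0) := fun s hs =>
    ((hd s (hsub hs)).continuousWithinAt).mono hsub
  have hconth : ContinuousOn h (Set.Icc x0 y0) := by
    apply hcontψ.sub
    apply ContinuousOn.mul continuousOn_const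
    apply ContinuousOn.log (by fun_prop)
    intro s hs
    have : l < s := by linarith [hs.1]
    exact ne_of_gt (by linarith : (0:ℝ) < s - l)
  have hderiv : ∀ c ∈ Set.Ioo x0 y0, HasDerivAt h (ψ' c - K * (1 / (c - l))) c := by
    intro c hc
    have hcl : l < c := by linarith [hc.1]
    have hcmem : c ∈ Set.Ioc l (l + ε) := ⟨hcl, by linarith [hc.2]⟩
    have h1 : HasDerivAt ψ (ψ' c) c := by
      apply (hd c hcmem).hasDerivAt
      exact Ioc_mem_nhds hcl (by linarith [hc.2])
    have h2 : HasDerivAt (fun s => Real.log (s - l)) (1 / (c - l)) c := by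
      have := (((hasDerivAt_id c).sub_const l).log (by linarith : c - l ≠ 0))
      simpa using this
    exact h1.sub (h2.const_mul K)
  obtain ⟨c, hc, hslope⟩ := exists_hasDerivAt_eq_slope h _ hx0y0 hconth hderiv
  have hcl : (0:ℝ) < c - l := by linarith [hc.1, ht0]
  have hpos : 0 ≤ ψ' c - K * (1 / (c - l)) := by
    have h1 : K < ψ' c * (c - l) := hkey c ⟨by linarith [hc.1], (hc.2).le⟩
    rw [sub_nonneg, mul_one_div, div_le_iff₀ hcl]
    linarith
  have hge : 0 ≤ h y0 - h x0 := by
    have h2 : 0 ≤ (h y0 - h x0) / (y0 - x0) := hslope ▸ hpos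
    have hne : (0:ℝ) < y0 - x0 := by linarith
    simpa using (le_div_iff₀ hne).mp h2
  -- compute log difference
  have hlogy0 : y0 - l = u := by simp [hy0_def]
  have hlogx0 : x0 - l = t := by simp [hx0_def]
  have hlogt : Real.log t = Real.log u + (-(C + 1) / K) := by
    rw [ht_def, Real.log_mul (ne_of_gt hu) (ne_of_gt (Real.exp_pos _)), Real.log_exp]
  have hdiff : ψ y0 - ψ x0 ≥ C + 1 := by
    have : h y0 - h x0 = ψ y0 - ψ x0 - K * (Real.log u - Real.log t) := by
      simp only [hh_def, hlogy0, hlogx0]; ring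
    rw [this] at hge
    have : K * (Real.log u - Real.log t) = C + 1 := by
      rw [hlogt]; field_simp; ring
    linarith
  have := hbdd y0 hy0mem x0 hx0mem
  have habs : ψ y0 - ψ x0 ≤ |ψ y0 - ψ x0| := le_abs_self _
  linarith

/-- Invariance argument for the functionals `C^{a,±}_{α,n}` in the proof of
Theorem 5.8 of the paper (case `a = 0`): if `ψ'(x)(x-l)` has a nonzero limit as
`x → l⁺`, then `ψ` is not `b`-Hölder on `(l, l+ε]` for any `b ∈ (0,1]`. -/
theorem stmt_7 (l ε : ℝ) (hε : 0 < ε)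
    (ψ ψ' : ℝ → ℝ)
    (hd : ∀ x ∈ Set.Ioc l (l + ε), HasDerivWithinAt ψ (ψ' x) (Set.Ioc l (l + ε)) x)
    (hcont : ContinuousOn ψ' (Set.Ioc l (l + ε)))
    (L : ℝ) (hL : L ≠ 0)
    (hlim : Filter.Tendsto (fun x => ψ' x * (x - l))
      (nhdsWithin l (Set.Ioi l)) (nhds L)) :
    ∀ b : ℝ, 0 < b → b ≤ 1 →
      ¬ ∃ M : ℝ, 0 ≤ M ∧ ∀ x ∈ Set.Ioc l (l + ε), ∀ y ∈ Set.Ioc l (l + ε),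
        |ψ x - ψ y| ≤ M * |x - y| ^ b := by
  intro b hb hb1
  rcases hL.lt_or_gt with hneg | hpos
  · -- apply aux to -ψ
    intro ⟨M, hM, hH⟩
    have hd' : ∀ x ∈ Set.Ioc l (l + ε),
        HasDerivWithinAt (fun s => -ψ s) (-ψ' x) (Set.Ioc l (l + ε)) x :=
      fun x hx => (hd x hx).neg
    have hlim' : Filter.Tendsto (fun x => (-ψ' x) * (x - l))
        (nhdsWithin l (Set.Ioi l)) (nhds (-L)) := by
      simpa [neg_mul] using hlim.neg
    exact stmt_7_aux l ε hε _ _ hd' (-L) (by linarith) hlim' b hb hb1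
      ⟨M, hM, fun x hx y hy => by rw [neg_sub_neg, abs_sub_comm]; exact hH x hx y hy⟩
  · exact stmt_7_aux l ε hε ψ ψ' hd L hpos hlim b hb hb1
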